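/- Let G be a linearly ordered group and S a finite subset of G with |S| = k ≥ 2. If |S·S| = 2|S| − 1, then there exist commuting elements x, y ∈ G such that S = {y, yx, yx², …, yx^{k−1}}, i.e., S is a geometric progression. -/

import Mathlib

open Pointwise

theorem stmt1 {G : Type*} [Group G] [LinearOrder G]
    [CovariantClass G G (· * ·) (· ≤ ·)]
    [CovariantClass G G (Function.swap (· * ·)) (· ≤ ·)]
    (S : Finset G) (k : ℕ) (hk : 2 ≤ k) (hcard : S.card = k)
    (h : (S * S).card = 2 * S.card - 1) :
    ∃ x y : G, x * y = y * x ∧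
      S = (Finset.range k).image (fun i => y * x ^ i) := by
  obtain ⟨n, rfl⟩ : ∃ n, k = n + 2 := ⟨k - 2, by omega⟩
  set b : ℕ → G := fun i => S.orderEmbOfFin hcard ⟨min i (n+1), by omega⟩ with hb
  have hbmem : ∀ i, b i ∈ S := fun i => Finset.orderEmbOfFin_mem S hcard _
  have hbmono : ∀ i j, i < j → j ≤ n+1 → b i < b j := by
    intro i j hij hj
    apply (S.orderEmbOfFin hcard).strictMono
    simp only [Fin.mk_lt_mk]
    omega
  have hSS : (S * S).card = 2*n+2+1 := by rw [h, hcard]; omega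
  have key : ∀ m, m ≤ n → b 0 * b (m+1) = b 1 * b m := by
    intro m hm
    set B : Fin (2*n+2+1) → G := fun j =>
      if j.val ≤ n+1 then b 0 * b j.val else b (j.val - (n+1)) * b (n+1) with hB
    set C : Fin (2*n+2+1) → G := fun j =>
      if j.val ≤ m then b 0 * b j.val
      else if j.val ≤ n+2 then b 1 * b (j.val - 1)
      else b (j.val - (n+1)) * b (n+1) with hC
    have hBmem : ∀ j, B j ∈ S * S := by
      intro j; simp only [hB]
      split_ifs <;> exact Finset.mul_mem_mul (hbmem _) (hbmem _)
    have hCmem : ∀ j, C j ∈ S * S := by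
      intro j; simp only [hC]
      split_ifs <;> exact Finset.mul_mem_mul (hbmem _) (hbmem _)
    have hBmono : StrictMono B := by
      rw [Fin.strictMono_iff_lt_succ]
      intro i
      simp only [hB, Fin.coe_castSucc, Fin.val_succ]
      rcases lt_trichotomy i.val (n+1) with hi | hi | hi
      · rw [if_pos (by omega), if_pos (by omega)]
        exact mul_lt_mul_right (hbmono _ _ (by omega) (by omega)) _
      · rw [if_pos (by omega), if_neg (by omega)]
        have h1 : i.val + 1 - (n+1) = 1 := by omega
        have h2 : i.val = n + 1 := hi
        rw [h1, h2]
        exact mul_lt_mul_left (hbmono 0 1 (by omega) (by omega)) _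
      · rw [if_neg (by omega), if_neg (by omega)]
        have hlt := i.isLt
        exact mul_lt_mul_left (hbmono _ _ (by omega) (by omega)) _
    have hCmono : StrictMono C := by
      rw [Fin.strictMono_iff_lt_succ]
      intro i
      simp only [hC, Fin.coe_castSucc, Fin.val_succ]
      have hlt := i.isLt
      rcases Nat.lt_or_ge (i.val + 1) (m+1) with hi | hi
      · rw [if_pos (by omega), if_pos (by omega)]
        exact mul_lt_mul_right (hbmono _ _ (by omega) (by omega)) _
      · rcases Nat.lt_or_ge i.val (m+1) with hi2 | hi2
        · -- i.val = m
          have hm2 : i.val = m := by omega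
          rw [if_pos (by omega), if_neg (by omega), if_pos (by omega)]
          have h1 : i.val + 1 - 1 = m := by omega
          rw [h1, hm2]
          exact mul_lt_mul_left (hbmono 0 1 (by omega) (by omega)) _
        · rcases Nat.lt_or_ge (i.val + 1) (n+3) with hi3 | hi3
          · rw [if_neg (by omega), if_pos (by omega), if_neg (by omega),
              if_pos (by omega)]
            exact mul_lt_mul_right (hbmono _ _ (by omega) (by omega)) _
          · rcases Nat.lt_or_ge i.val (n+3) with hi4 | hi4
            · -- i.val = n + 2
              have h4 : i.val = n + 2 := by omega
              rw [if_neg (by omega), if_pos (by omega), if_neg (by omega),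
                if_neg (by omega)]
              have h1 : i.val - 1 = n + 1 := by omega
              have h2 : i.val + 1 - (n+1) = 2 := by omega
              rw [h1, h2]
              exact mul_lt_mul_left (hbmono 1 2 (by omega) (by omega)) _
            · rw [if_neg (by omega), if_neg (by omega), if_neg (by omega),
                if_neg (by omega)]
              exact mul_lt_mul_left (hbmono _ _ (by omega) (by omega)) _
    have hBC : B = C :=
      (Finset.orderEmbOfFin_unique hSS hBmem hBmono).trans
        (Finset.orderEmbOfFin_unique hSS hCmem hCmono).symm
    have := congrFun hBC ⟨m+1, by omega⟩
    simp only [hB, hC] at this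
    rw [if_pos (by omega : m + 1 ≤ n+1), if_neg (by omega : ¬ m + 1 ≤ m),
      if_pos (by omega : m + 1 ≤ n+2)] at this
    simpa using this
  have hcomm0 : b 0 * b 1 = b 1 * b 0 := by
    have h0 := key 0 (by omega)
    simpa using h0
  refine ⟨(b 0)⁻¹ * b 1, b 0, ?_, ?_⟩
  · have hxy : (b 0)⁻¹ * b 1 * b 0 = b 1 := by
      rw [mul_assoc, ← hcomm0, ← mul_assoc, inv_mul_cancel, one_mul]
    have hyx : b 0 * ((b 0)⁻¹ * b 1) = b 1 := by
      rw [← mul_assoc, mul_inv_cancel, one_mul]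
    rw [hxy, hyx]
  · have hx : ∀ i, i ≤ n+1 → b i = b 0 * ((b 0)⁻¹ * b 1) ^ i := by
      intro i
      induction i with
      | zero => intro _; simp
      | succ m ih =>
        intro hm
        have hkey := key m (by omega)
        have step : b 0 * b (m+1) = b 0 * (b 0 * ((b 0)⁻¹ * b 1) ^ (m+1)) := by
          rw [hkey, ih (by omega), pow_succ']
          simp only [mul_assoc, mul_inv_cancel_left]
          rw [← mul_assoc, ← mul_assoc, hcomm0]
        exact mul_left_cancel step
    have himsub : (Finset.range (n+2)).image
        (fun i => b 0 * ((b 0)⁻¹ * b 1) ^ i) ⊆ S := by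
      intro s hs
      rw [Finset.mem_image] at hs
      obtain ⟨i, hi, rfl⟩ := hs
      rw [Finset.mem_range] at hi
      rw [← hx i (by omega)]
      exact hbmem i
    have hinj : Set.InjOn (fun i => b 0 * ((b 0)⁻¹ * b 1) ^ i)
        (Finset.range (n+2)) := by
      intro i hi j hj hij
      simp only [Finset.coe_range, Set.mem_Iio] at hi hj
      simp only at hij
      rw [← hx i (by omega), ← hx j (by omega)] at hij
      by_contra hne
      rcases Nat.lt_or_ge i j with hlt | hge
      · exact absurd hij (ne_of_lt (hbmono i j hlt (by omega)))
      · exact absurd hij.symm (ne_of_lt (hbmono j i (by omega) (by omega)))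
    exact (Finset.eq_of_subset_of_card_le himsub
      (by rw [Finset.card_image_of_injOn hinj, Finset.card_range]; omega)).symm
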